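/- Suppose v₁, v₂ are continuous functions on [R₀, ∞) × Ω with asymptotics ρ^{1/2} e^{−iκρ} v₁(ρẑ) → A(ẑ) and ρ^{1/2} e^{−iκρ} v₂(ρẑ) → B(ẑ) as ρ → ∞ for a fixed unit vector ẑ, where A(ẑ) ≠ 0. If v₁(ρẑ) = conj(v₂(ρẑ)) for all large ρ, then e^{2iκρ} converges as ρ → ∞ (to conj(B(ẑ))/A(ẑ)), which is a contradiction; hence v₁(ρẑ) = conj(v₂(ρẑ)) cannot hold for all large ρ when A(ẑ) ≠ 0. -/

import Mathlib

open Complex Filter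

set_option maxHeartbeats 1000000 in
/-- If `ρ^{1/2} e^{−iκρ} v₁(ρẑ) → A(ẑ) ≠ 0` and `ρ^{1/2} e^{−iκρ} v₂(ρẑ) → B(ẑ)`
as `ρ → ∞` for a fixed unit direction `ẑ`, then the relation
`v₁(ρẑ) = conj(v₂(ρẑ))` cannot hold for all large `ρ` (it would force
`e^{2iκρ}` to converge, a contradiction). -/
theorem no_conjugate_relation_of_farfield_limits
    (κ : ℝ) (hκ : 0 < κ)
    (zhat : EuclideanSpace ℝ (Fin 2)) (hzhat : ‖zhat‖ = 1)
    (v₁ v₂ : EuclideanSpace ℝ (Fin 2) → ℂ) (A B : ℂ) (hA : A ≠ 0)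
    (h₁ : Tendsto (fun ρ : ℝ =>
        ((Real.sqrt ρ : ℝ) : ℂ) * Complex.exp (-(Complex.I * κ * ρ)) * v₁ (ρ • zhat))
      atTop (nhds A))
    (h₂ : Tendsto (fun ρ : ℝ =>
        ((Real.sqrt ρ : ℝ) : ℂ) * Complex.exp (-(Complex.I * κ * ρ)) * v₂ (ρ • zhat))
      atTop (nhds B)) :
    ¬ (∀ᶠ ρ : ℝ in atTop, v₁ (ρ • zhat) = (starRingEnd ℂ) (v₂ (ρ • zhat))) := by
  intro hrel
  -- conjugate of h₂
  have h₂c : Tendsto (fun ρ : ℝ =>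
      ((Real.sqrt ρ : ℝ) : ℂ) * Complex.exp (Complex.I * κ * ρ) *
        (starRingEnd ℂ) (v₂ (ρ • zhat))) atTop (nhds ((starRingEnd ℂ) B)) := by
    have := (Complex.continuous_conj.tendsto B).comp h₂
    refine this.congr (fun ρ => ?_)
    simp only [Function.comp_apply, map_mul, ← Complex.exp_conj]
    congr 2
    · exact Complex.conj_ofReal _
    · simp
  -- replace conj v₂ by v₁
  have h₃ : Tendsto (fun ρ : ℝ =>
      ((Real.sqrt ρ : ℝ) : ℂ) * Complex.exp (Complex.I * κ * ρ) * v₁ (ρ • zhat))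
      atTop (nhds ((starRingEnd ℂ) B)) := by
    refine h₂c.congr' ?_
    filter_upwards [hrel] with ρ hρ
    rw [hρ]
  -- the quotient tends to conj B / A
  have hdiv : Tendsto (fun ρ : ℝ =>
      (((Real.sqrt ρ : ℝ) : ℂ) * Complex.exp (Complex.I * κ * ρ) * v₁ (ρ • zhat)) /
      (((Real.sqrt ρ : ℝ) : ℂ) * Complex.exp (-(Complex.I * κ * ρ)) * v₁ (ρ • zhat)))
      atTop (nhds ((starRingEnd ℂ) B / A)) := h₃.div h₁ hA
  -- eventually the denominator is nonzero
  have hne : ∀ᶠ ρ : ℝ in atTop,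
      ((Real.sqrt ρ : ℝ) : ℂ) * Complex.exp (-(Complex.I * κ * ρ)) * v₁ (ρ • zhat) ≠ 0 := by
    have : {0}ᶜ ∈ nhds A := by
      exact compl_singleton_mem_nhds hA
    filter_upwards [h₁ this] with ρ hρ
    simpa using hρ
  -- so exp(2iκρ) tends to conj B / A
  have hexp : Tendsto (fun ρ : ℝ => Complex.exp (2 * Complex.I * κ * ρ))
      atTop (nhds ((starRingEnd ℂ) B / A)) := by
    refine hdiv.congr' ?_
    filter_upwards [hne] with ρ hρ
    have hee : Complex.exp (2 * Complex.I * κ * ρ) * Complex.exp (-(Complex.I * κ * ρ))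
        = Complex.exp (Complex.I * κ * ρ) := by
      rw [← Complex.exp_add]; ring_nf
    rw [div_eq_iff hρ, ← hee]; ring
  -- evaluate along two sequences
  set L := (starRingEnd ℂ) B / A with hL
  have hseq1 : Tendsto (fun n : ℕ => (n : ℝ) * (Real.pi / κ)) atTop atTop := by
    exact tendsto_natCast_atTop_atTop.atTop_mul_const (div_pos Real.pi_pos hκ)
  have hseq2 : Tendsto (fun n : ℕ => (n : ℝ) * (Real.pi / κ) + Real.pi / (4 * κ)) atTop atTop :=
    tendsto_atTop_add_const_right atTop (Real.pi / (4 * κ)) hseq1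
  have hv1 := hexp.comp hseq1
  have hv2 := hexp.comp hseq2
  have hκC : (κ : ℂ) ≠ 0 := by exact_mod_cast hκ.ne'
  have e1 : ∀ n : ℕ, Complex.exp (2 * Complex.I * κ * (((n : ℝ) * (Real.pi / κ) : ℝ) : ℂ)) = 1 := by
    intro n
    have : (2 * Complex.I * κ * (((n : ℝ) * (Real.pi / κ) : ℝ) : ℂ) : ℂ)
        = (n : ℤ) * (2 * Real.pi * Complex.I) := by
      push_cast
      field_simp
    rw [this, Complex.exp_int_mul_two_pi_mul_I]
  have e2 : ∀ n : ℕ,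
      Complex.exp (2 * Complex.I * κ * (((n : ℝ) * (Real.pi / κ) + Real.pi / (4 * κ) : ℝ) : ℂ))
        = Complex.I := by
    intro n
    have : (2 * Complex.I * κ * (((n : ℝ) * (Real.pi / κ) + Real.pi / (4 * κ) : ℝ) : ℂ) : ℂ)
        = (n : ℤ) * (2 * Real.pi * Complex.I) + (Real.pi / 2) * Complex.I := by
      push_cast
      field_simp
      ring
    rw [this, Complex.exp_add, Complex.exp_int_mul_two_pi_mul_I, one_mul,
      Complex.exp_mul_I]
    push_cast
    rw [Complex.cos_pi_div_two, Complex.sin_pi_div_two]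
    ring
  have hone : L = 1 := by
    have := hv1.congr (fun n => e1 n)
    exact tendsto_nhds_unique this tendsto_const_nhds
  have hi : L = Complex.I := by
    have := hv2.congr (fun n => e2 n)
    exact tendsto_nhds_unique this tendsto_const_nhds
  have h1i : (1 : ℂ) = Complex.I := by rw [← hone, hi]
  simp [Complex.ext_iff] at h1i
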